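/- Let D₁ and D₂ be self-adjoint positive semidefinite operators on finite-dimensional real inner product spaces U and V, F : X → U, G : X → V linear maps, and suppose D₁ ⪰ sqrt((F G*)(F G*)*) and D₂ ⪰ sqrt((G F*)(G F*)*). Then the block operator M = [[D₁, −F G*], [−G F*, D₂]] on U × V is positive semidefinite. -/

import Mathlib

open ContinuousLinearMap RealInnerProductSpace

noncomputable section

/-- `T` is positive semidefinite: self-adjoint and `⟪x, T x⟫ ≥ 0` for all `x`. -/
def IsPSD {W : Type*} [NormedAddCommGroup W] [InnerProductSpace ℝ W]
    (T : W →L[ℝ] W) : Prop :=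
  (∀ x y, ⟪T x, y⟫ = ⟪x, T y⟫) ∧ ∀ x, 0 ≤ ⟪x, T x⟫

/-- `T` is positive definite: self-adjoint and `⟪x, T x⟫ > 0` for all `x ≠ 0`. -/
def IsPD {W : Type*} [NormedAddCommGroup W] [InnerProductSpace ℝ W]
    (T : W →L[ℝ] W) : Prop :=
  (∀ x y, ⟪T x, y⟫ = ⟪x, T y⟫) ∧ ∀ x, x ≠ 0 → 0 < ⟪x, T x⟫

/-- If `D₁ ⪰ sqrt((F G*)(F G*)*)` and `D₂ ⪰ sqrt((G F*)(G F*)*)` then the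
block operator `M = [[D₁, −F G*], [−G F*, D₂]]` is positive semidefinite
(expressed through its quadratic form on `U × V`). Here `S₁, S₂` are the
positive semidefinite square roots of `(F G*)(F G*)*` and `(G F*)(G F*)*`. -/
lemma amgm_aux (m a z : ℝ) (hm : 0 < m) : 2 * (a * z) ≤ m * a ^ 2 + z ^ 2 / m := by
  have h2 : z ^ 2 / m * m = z ^ 2 := div_mul_cancel₀ _ (ne_of_gt hm)
  nlinarith [sq_nonneg (m * a - z), hm, h2]


set_option maxHeartbeats 1000000 in
theorem jacobi_block_psd
    {X U V : Type*}
    [NormedAddCommGroup X] [InnerProductSpace ℝ X] [FiniteDimensional ℝ X]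
    [NormedAddCommGroup U] [InnerProductSpace ℝ U] [FiniteDimensional ℝ U]
    [NormedAddCommGroup V] [InnerProductSpace ℝ V] [FiniteDimensional ℝ V]
    (F : X →L[ℝ] U) (G : X →L[ℝ] V)
    (D1 S1 : U →L[ℝ] U) (D2 S2 : V →L[ℝ] V)
    (hD1 : IsPSD D1) (hD2 : IsPSD D2) (hS1 : IsPSD S1) (hS2 : IsPSD S2)
    (hS1sq : S1.comp S1 = (F.comp (adjoint G)).comp (G.comp (adjoint F)))
    (hS2sq : S2.comp S2 = (G.comp (adjoint F)).comp (F.comp (adjoint G)))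
    (hmaj1 : IsPSD (D1 - S1)) (hmaj2 : IsPSD (D2 - S2)) :
    ∀ (u : U) (v : V),
      0 ≤ ⟪u, D1 u⟫ - 2 * ⟪u, (F.comp (adjoint G)) v⟫ + ⟪v, D2 v⟫ := by
  classical
  intro u v
  set A : V →L[ℝ] U := F.comp (adjoint G) with hA
  set A' : U →L[ℝ] V := G.comp (adjoint F) with hA'
  -- adjoint relation
  have hadj : ∀ (x : U) (y : V), ⟪x, A y⟫ = ⟪A' x, y⟫ := by
    intro x y
    simp only [hA, hA', ContinuousLinearMap.comp_apply]
    rw [← adjoint_inner_left F, ← adjoint_inner_right G]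
  -- spectral decomposition of S2
  have hsym : (S2 : V →ₗ[ℝ] V).IsSymmetric := fun x y => hS2.1 x y
  set n := Module.finrank ℝ V with hn
  set b := hsym.eigenvectorBasis rfl with hb
  set μ := hsym.eigenvalues rfl with hμ
  have hbe : ∀ i, S2 (b i) = μ i • b i := fun i => hsym.apply_eigenvectorBasis rfl i
  have hμ0 : ∀ i, 0 ≤ μ i := by
    intro i
    have h := hS2.2 (b i)
    rw [hbe i, real_inner_smul_right, real_inner_self_eq_norm_sq, b.orthonormal.1 i] at h
    simpa using h
  set w : Fin n → U := fun i => A (b i) with hw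
  have hbij : ∀ i j, ⟪b i, b j⟫ = if i = j then (1:ℝ) else 0 := by
    intro i j
    rcases eq_or_ne i j with h | h
    · subst h; simp [real_inner_self_eq_norm_sq, b.orthonormal.1 i]
    · simp [h, b.orthonormal.2 h]
  have hAA : ∀ i, A' (A (b i)) = (μ i ^ 2) • b i := by
    intro i
    have : A' (A (b i)) = (S2.comp S2) (b i) := by rw [hS2sq]; rfl
    rw [this]
    simp only [ContinuousLinearMap.comp_apply, hbe i, map_smul, hbe i, smul_smul]
    rw [sq]
  have hwij : ∀ i j, ⟪w i, w j⟫ = if i = j then μ i ^ 2 else 0 := by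
    intro i j
    have h1 : ⟪w i, w j⟫ = ⟪A' (w i), b j⟫ := hadj (w i) (b j)
    rw [h1]
    show ⟪A' (A (b i)), b j⟫ = _
    rw [hAA i, real_inner_smul_left, hbij]
    rcases eq_or_ne i j with h | h
    · subst h; simp
    · simp [h]
  have hw0 : ∀ i, μ i = 0 → w i = 0 := by
    intro i h
    have h2 := hwij i i
    rw [if_pos rfl, h] at h2
    have : ⟪w i, w i⟫ = 0 := by rw [h2]; ring
    rwa [inner_self_eq_zero] at this
  -- S1 eigenvector property
  have hS1w : ∀ i, S1 (w i) = μ i • w i := by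
    intro i
    have hsq : S1 (S1 (w i)) = (μ i ^ 2) • w i := by
      have h1 : S1 (S1 (w i)) = (S1.comp S1) (w i) := rfl
      rw [h1, hS1sq]
      show A (A' (A (b i))) = _
      rw [hAA i, map_smul]
    rcases eq_or_ne (μ i) 0 with h0 | h0
    · rw [hw0 i h0]; simp
    · have hpos : 0 < μ i := lt_of_le_of_ne (hμ0 i) (Ne.symm h0)
      set z := S1 (w i) - μ i • w i with hz
      have hSz : S1 z = -(μ i) • z := by
        rw [hz]
        simp only [map_sub, map_smul, hsq]
        module
      have h1 : 0 ≤ ⟪z, S1 z⟫ := hS1.2 z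
      rw [hSz, real_inner_smul_right, real_inner_self_eq_norm_sq] at h1
      have hz0 : z = 0 := by
        by_contra hne
        have hnz : 0 < ‖z‖ := norm_pos_iff.mpr hne
        nlinarith [mul_pos hpos (mul_pos hnz hnz)]
      have : S1 (w i) - μ i • w i = 0 := hz0
      have := sub_eq_zero.mp this
      exact this
  -- coefficients
  set c : Fin n → ℝ := fun i => ⟪b i, v⟫ with hcdef
  set e : Fin n → ℝ := fun i => ⟪w i, u⟫ with hedef
  have hv : ∑ i, c i • b i = v := b.sum_repr' v
  have hAv : ⟪u, A v⟫ = ∑ i, c i * e i := by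
    conv_lhs => rw [← hv]
    rw [map_sum, inner_sum]
    refine Finset.sum_congr rfl fun i _ => ?_
    rw [map_smul, real_inner_smul_right, real_inner_comm]
  have hS2v : ⟪v, S2 v⟫ = ∑ i, μ i * c i ^ 2 := by
    have h1 : S2 v = ∑ i, (c i * μ i) • b i := by
      conv_lhs => rw [← hv]
      rw [map_sum]
      exact Finset.sum_congr rfl fun i _ => by rw [map_smul, hbe i, smul_smul]
    rw [h1, inner_sum]
    refine Finset.sum_congr rfl fun i _ => ?_
    rw [real_inner_smul_right, real_inner_comm]
    show c i * μ i * c i = _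
    ring
  set d : Fin n → ℝ := fun i => if μ i = 0 then 0 else e i ^ 2 / μ i with hddef
  set g : Fin n → ℝ := fun i => if μ i = 0 then 0 else e i / μ i ^ 2 with hgdef
  set s : U := ∑ i, g i • w i with hsdef
  have hwS1u : ∀ i, ⟪w i, S1 u⟫ = μ i * e i := by
    intro i
    rw [← hS1.1, hS1w i, real_inner_smul_left]
  have hsS1u : ⟪s, S1 u⟫ = ∑ i, g i * (μ i * e i) := by
    rw [hsdef, sum_inner]
    exact Finset.sum_congr rfl fun i _ => by rw [real_inner_smul_left, hwS1u i]
  have huS1s : ⟪u, S1 s⟫ = ∑ i, g i * (μ i * e i) := by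
    rw [← hS1.1, real_inner_comm]
    exact hsS1u
  have hsS1s : ⟪s, S1 s⟫ = ∑ i, g i ^ 2 * μ i ^ 3 := by
    have hS1sv : S1 s = ∑ j, (g j * μ j) • w j := by
      rw [hsdef, map_sum]
      exact Finset.sum_congr rfl fun j _ => by rw [map_smul, hS1w j, smul_smul]
    rw [hsdef, hS1sv, sum_inner]
    refine Finset.sum_congr rfl fun i _ => ?_
    rw [real_inner_smul_left, inner_sum]
    have : ∀ j ∈ Finset.univ, ⟪w i, (g j * μ j) • w j⟫ =
        if i = j then g j * μ j * μ i ^ 2 else 0 := by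
      intro j _
      rw [real_inner_smul_right, hwij i j]
      rcases eq_or_ne i j with h | h
      · subst h; simp
      · simp [h]
    rw [Finset.sum_congr rfl this, Finset.sum_ite_eq Finset.univ i
      (fun j => g j * μ j * μ i ^ 2)]
    simp only [Finset.mem_univ, if_true]
    ring
  have key1 : ∀ i, g i * (μ i * e i) = d i := by
    intro i
    rcases eq_or_ne (μ i) 0 with h | h
    · simp [hgdef, hddef, h]
    · simp only [hgdef, hddef, if_neg h]
      field_simp
  have key2 : ∀ i, g i ^ 2 * μ i ^ 3 = d i := by
    intro i
    rcases eq_or_ne (μ i) 0 with h | h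
    · simp [hgdef, hddef, h]
    · simp only [hgdef, hddef, if_neg h]
      field_simp
  have hdsum : ∑ i, d i ≤ ⟪u, S1 u⟫ := by
    have h0 : 0 ≤ ⟪u - s, S1 (u - s)⟫ := hS1.2 (u - s)
    rw [map_sub, inner_sub_left, inner_sub_right, inner_sub_right, hsS1u, huS1s,
      hsS1s] at h0
    rw [Finset.sum_congr rfl (fun i _ => key1 i), Finset.sum_congr rfl
      (fun i _ => key2 i)] at h0
    linarith
  have hamgm : ∀ i, 2 * (c i * e i) ≤ μ i * c i ^ 2 + d i := by
    intro i
    rcases eq_or_ne (μ i) 0 with h | h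
    · have hwz : w i = 0 := hw0 i h
      have he0 : e i = 0 := by simp [hedef, hwz]
      simp [hddef, h, he0]
    · have hpos : 0 < μ i := lt_of_le_of_ne (hμ0 i) (Ne.symm h)
      have hd : d i = e i ^ 2 / μ i := by simp [hddef, if_neg h]
      rw [hd]
      exact amgm_aux (μ i) (c i) (e i) hpos
  have hkey : 2 * ⟪u, A v⟫ ≤ ⟪u, S1 u⟫ + ⟪v, S2 v⟫ := by
    calc 2 * ⟪u, A v⟫ = ∑ i, 2 * (c i * e i) := by
          rw [hAv, Finset.mul_sum]
      _ ≤ ∑ i, (μ i * c i ^ 2 + d i) := Finset.sum_le_sum fun i _ => hamgm i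
      _ = (∑ i, μ i * c i ^ 2) + ∑ i, d i := Finset.sum_add_distrib
      _ ≤ ⟪v, S2 v⟫ + ⟪u, S1 u⟫ := by rw [hS2v]; linarith
      _ = _ := by ring
  have hm1 : ⟪u, S1 u⟫ ≤ ⟪u, D1 u⟫ := by
    have := hmaj1.2 u
    rw [ContinuousLinearMap.sub_apply, inner_sub_right] at this
    linarith
  have hm2 : ⟪v, S2 v⟫ ≤ ⟪v, D2 v⟫ := by
    have := hmaj2.2 v
    rw [ContinuousLinearMap.sub_apply, inner_sub_right] at this
    linarith
  linarith

end
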